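/- Let k be a field of characteristic zero, S = k[x,y,z,t], and d ≥ 1. Suppose ψ : S_d → S_d is a k-linear endomorphism such that for all linearly independent linear forms ℓ, h ∈ S_1 one has ψ(ℓ·S_{d-1} + h·S_{d-1}) ⊆ ℓ·S_{d-1} + h·S_{d-1}. Then ψ(ℓ·S_{d-1}) ⊆ ℓ·S_{d-1} for every linear form ℓ ∈ S_1. -/

import Mathlib

open MvPolynomial

section Aux

variable {k : Type*} [Field k]

private lemma degree_eq_one' {σ : Type*} (d : σ →₀ ℕ) (h : d.degree = 1) :
    ∃ i, d = Finsupp.single i 1 := by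
  classical
  obtain ⟨i, hi⟩ : d.support.Nonempty := by
    rw [Finsupp.support_nonempty_iff]
    rintro rfl
    simp [map_zero] at h
  have hge : 1 ≤ d i := Nat.one_le_iff_ne_zero.2 (Finsupp.mem_support_iff.1 hi)
  have hsum : d i + ∑ j ∈ d.support.erase i, d j = 1 := by
    rw [Finset.add_sum_erase _ _ hi]; exact h
  have hdi : d i = 1 := by omega
  have hrest : ∑ j ∈ d.support.erase i, d j = 0 := by omega
  refine ⟨i, ?_⟩
  ext j
  rcases eq_or_ne j i with rfl | hj
  · simp [hdi]
  · rw [Finsupp.single_apply, if_neg (fun hh => hj hh.symm)]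
    by_contra hd0
    have hjs : j ∈ d.support.erase i :=
      Finset.mem_erase.2 ⟨hj, Finsupp.mem_support_iff.2 hd0⟩
    exact hd0 ((Finset.sum_eq_zero_iff).1 hrest j hjs)

private lemma linear_rep (ℓ : MvPolynomial (Fin 4) k) (hl : ℓ.IsHomogeneous 1) :
    ℓ = ∑ i : Fin 4, C (coeff (Finsupp.single i 1) ℓ) * X i := by
  ext m
  rw [coeff_sum]
  simp only [coeff_C_mul, coeff_X']
  rcases eq_or_ne m.degree 1 with h1 | h1
  · obtain ⟨j, rfl⟩ := degree_eq_one' m h1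
    rw [Finset.sum_eq_single j]
    · simp
    · intro i _ hij
      rw [if_neg, mul_zero]
      simp [Finsupp.single_eq_single_iff, hij]
    · simp
  · rw [hl.coeff_eq_zero h1]
    symm
    apply Finset.sum_eq_zero
    intro i _
    rw [if_neg, mul_zero]
    rintro rfl
    exact h1 (by
      classical
      simp [Finsupp.degree_apply, Finsupp.support_single_ne_zero i one_ne_zero])

private lemma eval_linear (ℓ : MvPolynomial (Fin 4) k) (hl : ℓ.IsHomogeneous 1)
    (r : Fin 4 → k) :
    eval r ℓ = ∑ i : Fin 4, coeff (Finsupp.single i 1) ℓ * r i := by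
  conv_lhs => rw [linear_rep ℓ hl]
  simp

private lemma mem_span_of_vanishing [CharZero k] (ℓ g : MvPolynomial (Fin 4) k)
    (hl : ℓ.IsHomogeneous 1) (hlne : ℓ ≠ 0)
    (hz : ∀ p : Fin 4 → k, eval p ℓ = 0 → eval p g = 0) :
    g ∈ Ideal.span {ℓ} := by
  set c : Fin 4 → k := fun i => coeff (Finsupp.single i 1) ℓ with hc
  obtain ⟨j, hj⟩ : ∃ j, c j ≠ 0 := by
    by_contra hcon
    push_neg at hcon
    apply hlne
    rw [linear_rep ℓ hl]
    apply Finset.sum_eq_zero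
    intro i _
    have h0 : coeff (Finsupp.single i 1) ℓ = 0 := hcon i
    rw [h0]
    simp
  set F : Fin 4 → MvPolynomial (Fin 4) k :=
    fun i => if i = j then X j - C (c j)⁻¹ * ℓ else X i with hF
  have heval : ∀ p : Fin 4 → k, ∀ u : MvPolynomial (Fin 4) k,
      eval p (aeval F u) = eval (fun i => eval p (F i)) u := by
    intro p u
    have h1 := comp_aeval_apply (R := k) (aeval p) u (f := F)
    have h2 : ∀ v : MvPolynomial (Fin 4) k, (aeval p) v = eval p v := fun v => by
      rw [← coe_aeval_eq_eval]; rfl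
    rw [h2] at h1
    rw [h1]
    have h3 : ∀ (q : Fin 4 → k) (v : MvPolynomial (Fin 4) k),
        (aeval q) v = eval q v := fun q v => by rw [← coe_aeval_eq_eval]; rfl
    rw [h3]
    congr 1
  have hzero : aeval F g = 0 := by
    apply MvPolynomial.funext
    intro p
    rw [map_zero, heval]
    set q : Fin 4 → k := fun i => eval p (F i) with hq
    apply hz
    have hqi : ∀ i, q i = if i = j then p j - (c j)⁻¹ * eval p ℓ else p i := by
      intro i
      rw [hq]
      simp only [hF]
      split <;> simp
    rw [eval_linear ℓ hl q]
    have hterm : ∀ i : Fin 4,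
        c i * q i = c i * p i - (if i = j then eval p ℓ else 0) := by
      intro i
      rcases eq_or_ne i j with rfl | hij
      · rw [hqi, if_pos rfl, if_pos rfl, mul_sub, mul_inv_cancel_left₀ hj]
      · rw [hqi, if_neg hij, if_neg hij, sub_zero]
    rw [Finset.sum_congr rfl (fun i _ => hterm i), Finset.sum_sub_distrib,
      Finset.sum_ite_eq' Finset.univ j (fun _ => eval p ℓ)]
    rw [← eval_linear ℓ hl p]
    simp
  set I := Ideal.span ({ℓ} : Set (MvPolynomial (Fin 4) k)) with hI
  have key : (Ideal.Quotient.mkₐ k I).comp (aeval F) = Ideal.Quotient.mkₐ k I := by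
    apply MvPolynomial.algHom_ext
    intro i
    simp only [AlgHom.comp_apply, aeval_X]
    rcases eq_or_ne i j with rfl | hij
    · simp only [hF, if_pos rfl]
      rw [map_sub]
      have hmem : (C (c i)⁻¹ * ℓ) ∈ I :=
        Ideal.mul_mem_left _ _ (Ideal.subset_span rfl)
      rw [Ideal.Quotient.mkₐ_eq_mk, Ideal.Quotient.eq_zero_iff_mem.2 hmem, sub_zero]
    · simp only [hF, if_neg hij]
  have hg0 : Ideal.Quotient.mk I g = 0 := by
    have hkey := congrArg (fun (φ : MvPolynomial (Fin 4) k →ₐ[k] _) => φ g) key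
    simp only [AlgHom.comp_apply] at hkey
    rw [Ideal.Quotient.mkₐ_eq_mk] at hkey
    rw [← hkey, hzero, map_zero]
  exact (Ideal.Quotient.eq_zero_iff_mem).1 hg0

private lemma factor_homog (ℓ g : MvPolynomial (Fin 4) k) {d : ℕ} (hd : 1 ≤ d)
    (hl : ℓ.IsHomogeneous 1) (hg : g.IsHomogeneous d) (hmem : g ∈ Ideal.span {ℓ}) :
    ∃ q ∈ homogeneousSubmodule (Fin 4) k (d - 1), g = ℓ * q := by
  obtain ⟨q, rfl⟩ := (Ideal.mem_span_singleton).1 hmem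
  refine ⟨homogeneousComponent (d - 1) q,
    (mem_homogeneousSubmodule _ _).2 (homogeneousComponent_isHomogeneous _ _), ?_⟩
  have hsplit : ℓ * q = ∑ n ∈ Finset.range (q.totalDegree + 1),
      ℓ * homogeneousComponent n q := by
    rw [← Finset.mul_sum, sum_homogeneousComponent]
  have h1 : homogeneousComponent d (ℓ * q) = ℓ * q := by
    rw [homogeneousComponent_of_mem ((mem_homogeneousSubmodule _ _).2 hg), if_pos rfl]
  calc ℓ * q = homogeneousComponent d (ℓ * q) := h1.symm
    _ = ∑ n ∈ Finset.range (q.totalDegree + 1),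
        homogeneousComponent d (ℓ * homogeneousComponent n q) := by
        conv_lhs => rw [hsplit]
        rw [map_sum]
    _ = ∑ n ∈ Finset.range (q.totalDegree + 1),
        if d - 1 = n then ℓ * homogeneousComponent n q else 0 := by
        refine Finset.sum_congr rfl fun n _ => ?_
        have hmn : (ℓ * homogeneousComponent n q) ∈
            homogeneousSubmodule (Fin 4) k (1 + n) :=
          (mem_homogeneousSubmodule _ _).2
            (hl.mul (homogeneousComponent_isHomogeneous n q))
        rw [homogeneousComponent_of_mem hmn]
        exact if_congr (by omega) rfl rfl
    _ = if d - 1 ∈ Finset.range (q.totalDegree + 1)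
        then ℓ * homogeneousComponent (d - 1) q else 0 := by
        rw [Finset.sum_ite_eq]
    _ = ℓ * homogeneousComponent (d - 1) q := by
        split
        · rfl
        · rename_i hnot
          rw [homogeneousComponent_eq_zero, mul_zero]
          simp only [Finset.mem_range, not_lt] at hnot
          omega

private lemma exists_h (ℓ : MvPolynomial (Fin 4) k) (hlne : ℓ ≠ 0)
    (p : Fin 4 → k) (hp : p ≠ 0) :
    ∃ h : MvPolynomial (Fin 4) k, h ∈ homogeneousSubmodule (Fin 4) k 1 ∧
      eval p h = 0 ∧ LinearIndependent k ![ℓ, h] := by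
  obtain ⟨i, hi⟩ : ∃ i, p i ≠ 0 := by
    by_contra hcon; push_neg at hcon; exact hp (funext hcon)
  obtain ⟨j₁, j₂, hj12, hj1i, hj2i⟩ :=
    (by decide : ∀ i : Fin 4, ∃ j₁ j₂ : Fin 4, j₁ ≠ j₂ ∧ j₁ ≠ i ∧ j₂ ≠ i) i
  have hmem : ∀ j : Fin 4,
      (C (p i) * X j - C (p j) * X i) ∈ homogeneousSubmodule (Fin 4) k 1 := fun j =>
    (mem_homogeneousSubmodule _ _).2
      (((isHomogeneous_X k j).C_mul _).sub ((isHomogeneous_X k i).C_mul _))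
  have hev : ∀ j : Fin 4, eval p (C (p i) * X j - C (p j) * X i) = 0 := fun j => by
    simp [mul_comm]
  have hcoeff : ∀ j j' : Fin 4, j ≠ i → j' ≠ i → j ≠ j' →
      coeff (Finsupp.single j' 1) (C (p i) * X j - C (p j) * X i) = 0 := by
    intro j j' hji hj'i hjj'
    classical
    rw [coeff_sub, coeff_C_mul, coeff_C_mul, coeff_X', coeff_X',
      if_neg (by simp [Finsupp.single_eq_single_iff, hjj']),
      if_neg (by simp [Finsupp.single_eq_single_iff, Ne.symm hj'i])]
    ring
  have hcoeff' : ∀ j : Fin 4, j ≠ i →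
      coeff (Finsupp.single j 1) (C (p i) * X j - C (p j) * X i) = p i := by
    intro j hji
    classical
    rw [coeff_sub, coeff_C_mul, coeff_C_mul, coeff_X', coeff_X',
      if_pos rfl, if_neg (by simp [Finsupp.single_eq_single_iff, Ne.symm hji])]
    ring
  have hne : ∀ j : Fin 4, j ≠ i → (C (p i) * X j - C (p j) * X i) ≠ 0 := by
    intro j hji h0
    apply hi
    rw [← hcoeff' j hji, h0, coeff_zero]
  by_cases hcase : ∀ a : k, a • (C (p i) * X j₁ - C (p j₁) * X i) ≠ ℓ
  · refine ⟨_, hmem j₁, hev j₁, ?_⟩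
    rw [linearIndependent_fin2]
    constructor
    · simpa using hne j₁ hj1i
    · intro a
      simpa using hcase a
  · push_neg at hcase
    obtain ⟨a₁, ha₁⟩ := hcase
    refine ⟨_, hmem j₂, hev j₂, ?_⟩
    rw [linearIndependent_fin2]
    constructor
    · simpa using hne j₂ hj2i
    · intro a₂
      simp only [Matrix.cons_val_one, Matrix.head_cons, Matrix.cons_val_zero]
      intro ha₂
      have e1 : coeff (Finsupp.single j₂ 1) ℓ = 0 := by
        rw [← ha₁, coeff_smul, hcoeff j₁ j₂ hj1i hj2i hj12, smul_zero]
      have e2 : coeff (Finsupp.single j₂ 1) ℓ = a₂ * p i := by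
        rw [← ha₂, coeff_smul, hcoeff' j₂ hj2i, smul_eq_mul]
      have ha20 : a₂ = 0 := by
        rcases mul_eq_zero.1 (e2.symm.trans e1) with h | h
        · exact h
        · exact absurd h hi
      apply hlne
      rw [← ha₂, ha20, zero_smul]

end Aux

/-- Let `S = k[x,y,z,t]` (char `k` = 0), `d ≥ 1`, and let
`ψ : S_d → S_d` be `k`-linear such that `ψ(ℓ·S_{d-1} + h·S_{d-1}) ⊆ ℓ·S_{d-1} + h·S_{d-1}`
for all linearly independent linear forms `ℓ, h ∈ S₁`.  Then
`ψ(ℓ·S_{d-1}) ⊆ ℓ·S_{d-1}` for every linear form `ℓ ∈ S₁`. -/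
theorem stmt_7 {k : Type*} [Field k] [CharZero k] (d : ℕ) (hd : 1 ≤ d)
    (ψ : homogeneousSubmodule (Fin 4) k d →ₗ[k] homogeneousSubmodule (Fin 4) k d)
    (hψ : ∀ ℓ h : MvPolynomial (Fin 4) k,
      ℓ ∈ homogeneousSubmodule (Fin 4) k 1 → h ∈ homogeneousSubmodule (Fin 4) k 1 →
      LinearIndependent k ![ℓ, h] →
      ∀ f : homogeneousSubmodule (Fin 4) k d,
        (f : MvPolynomial (Fin 4) k) ∈
            Submodule.map (LinearMap.mulLeft k ℓ) (homogeneousSubmodule (Fin 4) k (d - 1)) ⊔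
              Submodule.map (LinearMap.mulLeft k h) (homogeneousSubmodule (Fin 4) k (d - 1)) →
          (ψ f : MvPolynomial (Fin 4) k) ∈
            Submodule.map (LinearMap.mulLeft k ℓ) (homogeneousSubmodule (Fin 4) k (d - 1)) ⊔
              Submodule.map (LinearMap.mulLeft k h) (homogeneousSubmodule (Fin 4) k (d - 1))) :
    ∀ ℓ ∈ homogeneousSubmodule (Fin 4) k 1,
      ∀ f : homogeneousSubmodule (Fin 4) k d,
        (f : MvPolynomial (Fin 4) k) ∈
            Submodule.map (LinearMap.mulLeft k ℓ) (homogeneousSubmodule (Fin 4) k (d - 1)) →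
          (ψ f : MvPolynomial (Fin 4) k) ∈
            Submodule.map (LinearMap.mulLeft k ℓ) (homogeneousSubmodule (Fin 4) k (d - 1)) := by
  intro ℓ hl f hf
  rcases eq_or_ne ℓ 0 with rfl | hlne
  · obtain ⟨a, _, hfa⟩ := hf
    have hf0 : (f : MvPolynomial (Fin 4) k) = 0 := by
      rw [← hfa, LinearMap.mulLeft_apply, zero_mul]
    have hfz : f = 0 := Subtype.ext hf0
    rw [hfz, map_zero]
    exact Submodule.zero_mem _
  · have hlh : ℓ.IsHomogeneous 1 := (mem_homogeneousSubmodule _ _).1 hl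
    have hgh : (ψ f : MvPolynomial (Fin 4) k).IsHomogeneous d := (ψ f).2
    have hvan : ∀ p : Fin 4 → k, eval p ℓ = 0 →
        eval p (ψ f : MvPolynomial (Fin 4) k) = 0 := by
      intro p hpl
      rcases eq_or_ne p 0 with rfl | hp0
      · rw [eval_zero, constantCoeff_eq]
        exact hgh.coeff_eq_zero (by simp [map_zero]; omega)
      · obtain ⟨h, hhmem, hhp, hind⟩ := exists_h ℓ hlne p hp0
        have hsup := hψ ℓ h hl hhmem hind f (Submodule.mem_sup_left hf)
        obtain ⟨a, ha, b, hb, hab⟩ := Submodule.mem_sup.1 hsup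
        obtain ⟨a', _, rfl⟩ := ha
        obtain ⟨b', _, rfl⟩ := hb
        rw [← hab]
        simp [LinearMap.mulLeft_apply, hpl, hhp]
    have hspan : (ψ f : MvPolynomial (Fin 4) k) ∈ Ideal.span {ℓ} :=
      mem_span_of_vanishing ℓ _ hlh hlne hvan
    obtain ⟨q, hq, hgq⟩ := factor_homog ℓ _ hd hlh hgh hspan
    exact ⟨q, hq, by rw [LinearMap.mulLeft_apply, ← hgq]⟩
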